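/- Let J_DD be symmetric negative definite, J_DG have full column rank, and η > 0 satisfy η < 1/(2 λ_max(-J_DD)). Then the matrix M = [[J_DD, J_DG], [-J_DG^T (I + 2η J_DD), -2η J_DG^T J_DG]] is Hurwitz. -/

import Mathlib

open Matrix

def IsHurwitz {ι : Type*} [Fintype ι] [DecidableEq ι] (A : Matrix ι ι ℝ) : Prop :=
  ∀ μ ∈ spectrum ℂ (A.map Complex.ofReal), μ.re < 0

section GanAux
variable {k l : ℕ}

private lemma gan_conj_dot (B : Matrix (Fin k) (Fin l) ℝ) (x : Fin k → ℂ) (y : Fin l → ℂ) :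
    star y ⬝ᵥ ((Bᵀ.map Complex.ofReal) *ᵥ x) = star (star x ⬝ᵥ ((B.map Complex.ofReal) *ᵥ y)) := by
  simp only [dotProduct, mulVec, map_apply, transpose_apply, Pi.star_apply, Finset.mul_sum,
    star_sum, star_mul', star_star, Complex.star_def, Complex.conj_ofReal]
  rw [Finset.sum_comm]
  refine Finset.sum_congr rfl fun i _ => Finset.sum_congr rfl fun j _ => ?_
  rw [Complex.conj_conj]
  ring

private lemma gan_re_quad (S : Matrix (Fin k) (Fin k) ℝ) (x : Fin k → ℂ) :
    (star x ⬝ᵥ ((S.map Complex.ofReal) *ᵥ x)).re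
      = (fun i => (x i).re) ⬝ᵥ (S *ᵥ fun i => (x i).re)
        + (fun i => (x i).im) ⬝ᵥ (S *ᵥ fun i => (x i).im) := by
  simp only [dotProduct, mulVec, map_apply, Pi.star_apply, Complex.re_sum,
    ← Finset.sum_add_distrib]
  refine Finset.sum_congr rfl fun i _ => ?_
  rw [Finset.mul_sum, Complex.re_sum, Finset.mul_sum, Finset.mul_sum, ← Finset.sum_add_distrib]
  refine Finset.sum_congr rfl fun j _ => ?_
  simp [Complex.mul_re]
  try ring

private lemma gan_cquad_neg (P : Matrix (Fin k) (Fin k) ℝ)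
    (hneg : ∀ a : Fin k → ℝ, a ≠ 0 → a ⬝ᵥ (P *ᵥ a) < 0)
    (x : Fin k → ℂ) (hx : x ≠ 0) :
    (star x ⬝ᵥ ((P.map Complex.ofReal) *ᵥ x)).re < 0 := by
  rw [gan_re_quad]
  set a : Fin k → ℝ := fun i => (x i).re with ha
  set b : Fin k → ℝ := fun i => (x i).im with hb
  have hterm : ∀ c : Fin k → ℝ, c ⬝ᵥ (P *ᵥ c) ≤ 0 := by
    intro c
    by_cases hc : c = 0
    · simp [hc]
    · exact (hneg c hc).le
  have hab : a ≠ 0 ∨ b ≠ 0 := by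
    by_contra h
    push_neg at h
    apply hx
    funext i
    exact Complex.ext (congrFun h.1 i) (congrFun h.2 i)
  rcases hab with h | h
  · have := hneg a h; have := hterm b; linarith
  · have := hneg b h; have := hterm a; linarith

private lemma gan_dot_star_self (x : Fin k → ℂ) :
    star x ⬝ᵥ x = ((∑ i, Complex.normSq (x i) : ℝ) : ℂ) := by
  rw [Complex.ofReal_sum]
  refine Finset.sum_congr rfl fun i _ => ?_
  simp [Complex.normSq_eq_conj_mul_self]

private lemma gan_dot_star_self_pos {x : Fin k → ℂ} (hx : x ≠ 0) :
    0 < ∑ i, Complex.normSq (x i) := by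
  obtain ⟨i, hi⟩ : ∃ i, x i ≠ 0 := by
    by_contra h; push_neg at h; exact hx (funext h)
  exact Finset.sum_pos' (fun j _ => Complex.normSq_nonneg _)
    ⟨i, Finset.mem_univ i, Complex.normSq_pos.mpr hi⟩

private lemma gan_dot_star_self_nonneg (x : Fin k → ℂ) :
    0 ≤ ∑ i, Complex.normSq (x i) :=
  Finset.sum_nonneg fun i _ => Complex.normSq_nonneg _

private lemma gan_mulVec_map_re_im (B : Matrix (Fin k) (Fin l) ℝ) (y : Fin l → ℂ)
    (h : (B.map Complex.ofReal) *ᵥ y = 0) :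
    B *ᵥ (fun j => (y j).re) = 0 ∧ B *ᵥ (fun j => (y j).im) = 0 := by
  constructor <;> funext i <;>
  · have := congrFun h i
    simp only [mulVec, dotProduct, map_apply, Pi.zero_apply] at this ⊢
    first
    | · have := congrArg Complex.re this
        simpa [Complex.re_sum, Complex.mul_re] using this
    | · have := congrArg Complex.im this
        simpa [Complex.im_sum, Complex.mul_im] using this

private lemma gan_map_mul {ι κ ρ : Type*} [Fintype κ] (M : Matrix ι κ ℝ) (N : Matrix κ ρ ℝ) :
    (M * N).map Complex.ofReal = M.map Complex.ofReal * N.map Complex.ofReal := by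
  ext i j
  simp [Matrix.mul_apply, Complex.ofReal_sum]

end GanAux

theorem regularized_gan_jacobian_hurwitz {n m : ℕ}
    (JDD : Matrix (Fin n) (Fin n) ℝ) (hsym : JDD.IsSymm) (hnd : (-JDD).PosDef)
    (JDG : Matrix (Fin n) (Fin m) ℝ) (hr : JDG.rank = m)
    (η : ℝ) (hη : 0 < η)
    (hηb : ∀ μ ∈ spectrum ℝ (-JDD), η < 1 / (2 * μ)) :
    IsHurwitz (fromBlocks JDD JDG
      (-(JDGᵀ * (1 + (2 * η) • JDD))) ((-(2 * η)) • (JDGᵀ * JDG))) := by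
  have of := Complex.ofReal
  -- real block matrices
  set L : Matrix (Fin n ⊕ Fin m) (Fin n ⊕ Fin m) ℝ :=
    fromBlocks 1 0 ((-(2*η)) • JDGᵀ) 1 with hLdef
  set M₀ : Matrix (Fin n ⊕ Fin m) (Fin n ⊕ Fin m) ℝ :=
    fromBlocks JDD JDG (-JDGᵀ) 0 with hM₀def
  set S : Matrix (Fin n) (Fin n) ℝ := JDD - (2*η) • (JDG * JDGᵀ) with hSdef
  have hMfact : fromBlocks JDD JDG
      (-(JDGᵀ * (1 + (2 * η) • JDD))) ((-(2 * η)) • (JDGᵀ * JDG)) = L * M₀ := by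
    rw [hLdef, hM₀def, fromBlocks_multiply, fromBlocks_inj]
    refine ⟨by simp, by simp, ?_, by simp [Matrix.smul_mul]⟩
    simp only [Matrix.smul_mul, Matrix.mul_add, Matrix.mul_smul, Matrix.mul_one,
      Matrix.one_mul, neg_smul, neg_add]
    abel_nf
    simp [Matrix.smul_mul]
  have hM'fact : M₀ * L = fromBlocks S JDG (-JDGᵀ) 0 := by
    rw [hLdef, hM₀def, fromBlocks_multiply, fromBlocks_inj]
    refine ⟨?_, by simp, by simp, by simp⟩
    simp [Matrix.mul_smul, hSdef, sub_eq_add_neg]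
  -- negativity of quadratic forms
  have hJDDneg : ∀ a : Fin n → ℝ, a ≠ 0 → a ⬝ᵥ (JDD *ᵥ a) < 0 := by
    intro a ha
    have h := (Matrix.posDef_iff_dotProduct_mulVec.mp hnd).2 ha
    rw [Matrix.neg_mulVec] at h
    simp only [star_trivial, dotProduct_neg] at h
    linarith
  have hSneg : ∀ a : Fin n → ℝ, a ≠ 0 → a ⬝ᵥ (S *ᵥ a) < 0 := by
    intro a ha
    have h1 := hJDDneg a ha
    have h2 : 0 ≤ a ⬝ᵥ ((JDG * JDGᵀ) *ᵥ a) := by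
      have h4 : a ⬝ᵥ ((JDG * JDGᵀ) *ᵥ a) = (JDGᵀ *ᵥ a) ⬝ᵥ (JDGᵀ *ᵥ a) := by
        rw [← Matrix.mulVec_mulVec, Matrix.dotProduct_mulVec, ← Matrix.mulVec_transpose]
      rw [h4]
      exact Finset.sum_nonneg fun i _ => mul_self_nonneg _
    have h3 : a ⬝ᵥ (S *ᵥ a)
        = a ⬝ᵥ (JDD *ᵥ a) - (2*η) * (a ⬝ᵥ ((JDG * JDGᵀ) *ᵥ a)) := by
      rw [hSdef, Matrix.sub_mulVec, dotProduct_sub, Matrix.smul_mulVec,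
        dotProduct_smul, smul_eq_mul]
    rw [h3]
    nlinarith
  -- real injectivity of JDG
  have hinjR : ∀ a : Fin m → ℝ, JDG *ᵥ a = 0 → a = 0 := by
    intro a ha
    have hfin := LinearMap.finrank_range_add_finrank_ker (JDG.mulVecLin)
    rw [Module.finrank_fin_fun] at hfin
    have hrk : Module.finrank ℝ (LinearMap.range JDG.mulVecLin) = m := hr
    have hker : Module.finrank ℝ (LinearMap.ker JDG.mulVecLin) = 0 := by omega
    have hbot : LinearMap.ker JDG.mulVecLin = ⊥ := Submodule.finrank_eq_zero.mp hker
    have hmem : a ∈ LinearMap.ker JDG.mulVecLin := by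
      simp only [LinearMap.mem_ker, Matrix.mulVecLin_apply]; exact ha
    rw [hbot] at hmem
    simpa using hmem
  have hinjC : ∀ y : Fin m → ℂ, (JDG.map Complex.ofReal) *ᵥ y = 0 → y = 0 := by
    intro y hy
    obtain ⟨h1, h2⟩ := gan_mulVec_map_re_im JDG y hy
    have e1 := hinjR _ h1
    have e2 := hinjR _ h2
    funext j
    exact Complex.ext (congrFun e1 j) (congrFun e2 j)
  -- spectrum: extract an eigenvector
  intro μ hμ
  rw [hMfact, gan_map_mul] at hμ
  rw [spectrum.mem_iff] at hμ
  rw [Matrix.isUnit_iff_isUnit_det, isUnit_iff_ne_zero, not_not,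
    ← Matrix.exists_mulVec_eq_zero_iff] at hμ
  obtain ⟨v, hv0, hv1⟩ := hμ
  have hv : (L.map Complex.ofReal * M₀.map Complex.ofReal) *ᵥ v = μ • v := by
    rw [Algebra.algebraMap_eq_smul_one, Matrix.sub_mulVec, Matrix.smul_mulVec,
      Matrix.one_mulVec, sub_eq_zero] at hv1
    exact hv1.symm
  -- maps of block matrices
  have hM₀map : M₀.map Complex.ofReal
      = fromBlocks (JDD.map Complex.ofReal) (JDG.map Complex.ofReal)
        (-(JDGᵀ.map Complex.ofReal)) 0 := by
    rw [hM₀def, fromBlocks_map, fromBlocks_inj]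
    refine ⟨rfl, rfl, ?_, ?_⟩ <;> ext i j <;> simp
  have hM'map : (M₀.map Complex.ofReal) * (L.map Complex.ofReal)
      = fromBlocks (S.map Complex.ofReal) (JDG.map Complex.ofReal)
        (-(JDGᵀ.map Complex.ofReal)) 0 := by
    rw [← gan_map_mul, hM'fact, fromBlocks_map, fromBlocks_inj]
    refine ⟨rfl, rfl, ?_, ?_⟩ <;> ext i j <;> simp
  set w : (Fin n ⊕ Fin m) → ℂ := (M₀.map Complex.ofReal) *ᵥ v with hwdef
  have hLw : (L.map Complex.ofReal) *ᵥ w = μ • v := by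
    rw [hwdef, Matrix.mulVec_mulVec]
    exact hv
  have heig : (fromBlocks (S.map Complex.ofReal) (JDG.map Complex.ofReal)
      (-(JDGᵀ.map Complex.ofReal)) 0) *ᵥ w = μ • w := by
    rw [← hM'map, ← Matrix.mulVec_mulVec, hLw, Matrix.mulVec_smul]
  -- the transformed vector is nonzero
  have hw0 : w ≠ 0 := by
    intro h0
    have h0' : (fromBlocks (JDD.map Complex.ofReal) (JDG.map Complex.ofReal)
        (-(JDGᵀ.map Complex.ofReal)) 0) *ᵥ v = 0 := by
      rw [← hM₀map, ← hwdef]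
      exact h0
    rw [fromBlocks_mulVec] at h0'
    have f1 : (JDD.map Complex.ofReal) *ᵥ (v ∘ Sum.inl)
        + (JDG.map Complex.ofReal) *ᵥ (v ∘ Sum.inr) = 0 := by
      funext i; simpa using congrFun h0' (Sum.inl i)
    have f2 : (JDGᵀ.map Complex.ofReal) *ᵥ (v ∘ Sum.inl) = 0 := by
      funext i
      have h5 := congrFun h0' (Sum.inr i)
      simp only [Sum.elim_inr, Matrix.neg_mulVec, Matrix.zero_mulVec, add_zero,
        Pi.neg_apply, Pi.zero_apply, neg_eq_zero] at h5
      exact h5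
    have hz : star (v ∘ Sum.inl) ⬝ᵥ ((JDG.map Complex.ofReal) *ᵥ (v ∘ Sum.inr)) = 0 := by
      have hcd := gan_conj_dot JDG (v ∘ Sum.inl) (v ∘ Sum.inr)
      rw [f2] at hcd
      simp only [dotProduct_zero] at hcd
      exact (star_eq_zero.mp hcd.symm)
    have hq : star (v ∘ Sum.inl) ⬝ᵥ ((JDD.map Complex.ofReal) *ᵥ (v ∘ Sum.inl)) = 0 := by
      have h6 := congrArg (fun u => star (v ∘ Sum.inl) ⬝ᵥ u) f1
      simpa [dotProduct_add, hz] using h6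
    have hxv : (v ∘ Sum.inl) = 0 := by
      by_contra hxv
      have h7 := gan_cquad_neg JDD hJDDneg _ hxv
      rw [hq] at h7
      simp at h7
    have hyv : (v ∘ Sum.inr) = 0 := by
      apply hinjC
      have h8 := f1
      rw [hxv, Matrix.mulVec_zero, zero_add] at h8
      exact h8
    apply hv0
    funext i
    cases i with
    | inl i => exact congrFun hxv i
    | inr i => exact congrFun hyv i
  -- eigen-equations for the transformed system
  rw [fromBlocks_mulVec] at heig
  have e1 : (S.map Complex.ofReal) *ᵥ (w ∘ Sum.inl)
      + (JDG.map Complex.ofReal) *ᵥ (w ∘ Sum.inr) = μ • (w ∘ Sum.inl) := by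
    funext i; simpa using congrFun heig (Sum.inl i)
  have e2 : -((JDGᵀ.map Complex.ofReal) *ᵥ (w ∘ Sum.inl)) = μ • (w ∘ Sum.inr) := by
    funext i
    have h5 := congrFun heig (Sum.inr i)
    simpa [Matrix.neg_mulVec, Matrix.zero_mulVec] using h5
  have hx0 : (w ∘ Sum.inl) ≠ 0 := by
    intro h
    apply hw0
    have hBy : (JDG.map Complex.ofReal) *ᵥ (w ∘ Sum.inr) = 0 := by
      have h9 := e1
      rw [h, Matrix.mulVec_zero, zero_add, smul_zero] at h9
      exact h9
    have hy := hinjC _ hBy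
    funext i
    cases i with
    | inl i => exact congrFun h i
    | inr i => exact congrFun hy i
  have c1 : star (w ∘ Sum.inl) ⬝ᵥ ((S.map Complex.ofReal) *ᵥ (w ∘ Sum.inl))
      + star (w ∘ Sum.inl) ⬝ᵥ ((JDG.map Complex.ofReal) *ᵥ (w ∘ Sum.inr))
      = μ * (star (w ∘ Sum.inl) ⬝ᵥ (w ∘ Sum.inl)) := by
    rw [← dotProduct_add, e1, dotProduct_smul, smul_eq_mul]
  have c2 : -(star (w ∘ Sum.inr) ⬝ᵥ ((JDGᵀ.map Complex.ofReal) *ᵥ (w ∘ Sum.inl)))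
      = μ * (star (w ∘ Sum.inr) ⬝ᵥ (w ∘ Sum.inr)) := by
    rw [← dotProduct_neg, e2, dotProduct_smul, smul_eq_mul]
  rw [gan_conj_dot] at c2
  have hsum : star (w ∘ Sum.inl) ⬝ᵥ ((S.map Complex.ofReal) *ᵥ (w ∘ Sum.inl))
      + (star (w ∘ Sum.inl) ⬝ᵥ ((JDG.map Complex.ofReal) *ᵥ (w ∘ Sum.inr))
        - star (star (w ∘ Sum.inl) ⬝ᵥ ((JDG.map Complex.ofReal) *ᵥ (w ∘ Sum.inr))))
      = μ * (star (w ∘ Sum.inl) ⬝ᵥ (w ∘ Sum.inl) + star (w ∘ Sum.inr) ⬝ᵥ (w ∘ Sum.inr)) := by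
    linear_combination c1 + c2
  rw [gan_dot_star_self (w ∘ Sum.inl), gan_dot_star_self (w ∘ Sum.inr)] at hsum
  have hre := congrArg Complex.re hsum
  simp only [Complex.add_re, Complex.sub_re, Complex.star_def, Complex.conj_re,
    Complex.mul_re, Complex.add_im, Complex.ofReal_re, Complex.ofReal_im, add_zero,
    mul_zero, sub_zero, sub_self] at hre
  have hq := gan_cquad_neg S hSneg _ hx0
  have hp1 := gan_dot_star_self_pos hx0
  have hp2 := gan_dot_star_self_nonneg (w ∘ Sum.inr)
  nlinarith [hre, hq, hp1, hp2]
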